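/- Let n ≥ 1, ρ > 0. Assume (Hf), (HVar) and (Hg), and let Φ_ref : ℝ → ℝⁿ be bounded and measurable with f(Φ_ref) ∈ L² and g(Φ_ref) ∈ L². Then there exist K > 0 and ϑ > 0 such that for all v ∈ H¹: −2ρ‖∂ξv‖_{L²}² + 2⟨f(Φ_ref + v), v⟩_{L²} + ‖g(Φ_ref + v)‖_{L²}² + ϑ‖v‖_{H¹}² ≤ K(1 + ‖v‖_{L²}²). -/

import Mathlib

open MeasureTheory

noncomputable section

abbrev En (n : ℕ) : Type := EuclideanSpace ℝ (Fin n)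

/-- membership in `L²(ℝ;ℝⁿ)` -/
def memL2 {n : ℕ} (f : ℝ → En n) : Prop := MemLp f 2 volume

/-- the `L²` norm -/
def l2norm {n : ℕ} (f : ℝ → En n) : ℝ := (eLpNorm f 2 volume).toReal

/-- the `L²` inner product -/
def l2inner {n : ℕ} (f g : ℝ → En n) : ℝ := ∫ ξ, (inner ℝ (f ξ) (g ξ) : ℝ)

/-- `f` is locally absolutely continuous with derivative `f'` -/
def hasWeakDeriv {n : ℕ} (f f' : ℝ → En n) : Prop :=
  LocallyIntegrable f' volume ∧ ∀ x y : ℝ, f y - f x = ∫ t in x..y, f' t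

/-- membership in `H¹`, with the derivative recorded explicitly -/
def memH1 {n : ℕ} (f f' : ℝ → En n) : Prop :=
  hasWeakDeriv f f' ∧ memL2 f ∧ memL2 f'

/-- the `H¹` norm -/
def h1norm {n : ℕ} (f f' : ℝ → En n) : ℝ :=
  Real.sqrt ((l2norm f)^2 + (l2norm f')^2)

/-- membership in `H²`, with both derivatives recorded explicitly -/
def memH2 {n : ℕ} (f f' f'' : ℝ → En n) : Prop :=
  memH1 f f' ∧ memH1 f' f''

/-- the `H²` norm -/
def h2norm {n : ℕ} (f f' f'' : ℝ → En n) : ℝ :=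
  Real.sqrt ((l2norm f)^2 + (l2norm f')^2 + (l2norm f'')^2)

lemma aux_inner_integrable {n : ℕ} {F V : ℝ → En n} (hF : MemLp F 2 volume)
    (hV : MemLp V 2 volume) : Integrable (fun ξ => (inner ℝ (F ξ) (V ξ) : ℝ)) volume := by
  have h := L2.integrable_inner (𝕜 := ℝ) (hF.toLp F) (hV.toLp V)
  refine h.congr ?_
  filter_upwards [hF.coeFn_toLp, hV.coeFn_toLp] with x h1 h2
  rw [h1, h2]

lemma aux_integral_inner_eq {n : ℕ} {F V : ℝ → En n} (hF : MemLp F 2 volume)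
    (hV : MemLp V 2 volume) :
    ∫ ξ, (inner ℝ (F ξ) (V ξ) : ℝ) = (inner ℝ (hF.toLp F) (hV.toLp V) : ℝ) := by
  rw [L2.inner_def]
  refine integral_congr_ae ?_
  filter_upwards [hF.coeFn_toLp, hV.coeFn_toLp] with x h1 h2
  rw [h1, h2]

lemma aux_inner_integral_le {n : ℕ} {F V : ℝ → En n} (hF : MemLp F 2 volume)
    (hV : MemLp V 2 volume) :
    ∫ ξ, (inner ℝ (F ξ) (V ξ) : ℝ) ≤ (eLpNorm F 2 volume).toReal * (eLpNorm V 2 volume).toReal := by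
  rw [aux_integral_inner_eq hF hV, ← MeasureTheory.Lp.norm_toLp F hF,
    ← MeasureTheory.Lp.norm_toLp V hV]
  exact real_inner_le_norm _ _

lemma aux_integral_norm_sq {n : ℕ} {V : ℝ → En n} (hV : MemLp V 2 volume) :
    ∫ ξ, ‖V ξ‖^2 = ((eLpNorm V 2 volume).toReal)^2 := by
  have h1 : ∫ ξ, ‖V ξ‖^2 = ∫ ξ, (inner ℝ (V ξ) (V ξ) : ℝ) := by
    congr 1; ext ξ; rw [real_inner_self_eq_norm_sq]
  rw [h1, aux_integral_inner_eq hV hV, real_inner_self_eq_norm_sq,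
    MeasureTheory.Lp.norm_toLp V hV]

set_option maxHeartbeats 2000000 in
/-- the coercivity estimate used for the variational framework. -/
theorem statement9 {n : ℕ} (hn : 1 ≤ n) (ρ : ℝ) (hρ : 0 < ρ)
    (f g : En n → En n)
    (hf : ContDiff ℝ 3 f) (Kf : ℝ) (hKf : 0 < Kf)
    (hD3 : ∀ u : En n, ‖iteratedFDeriv ℝ 3 f u‖ ≤ Kf)
    (Kvar : ℝ) (hKvar : 0 < Kvar)
    (hVar : ∀ uA uB : En n, (inner ℝ (f uA - f uB) (uA - uB) : ℝ) ≤ Kvar * ‖uA - uB‖^2)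
    (Kg : ℝ) (hKg : 0 < Kg)
    (hgLip : ∀ uA uB : En n, ‖g uA - g uB‖ ≤ Kg * ‖uA - uB‖)
    (Φref : ℝ → En n) (hmeas : Measurable Φref)
    (hbdd : ∃ B : ℝ, ∀ ξ, ‖Φref ξ‖ ≤ B)
    (hfΦref : memL2 (fun ξ => f (Φref ξ)))
    (hgΦref : memL2 (fun ξ => g (Φref ξ))) :
    ∃ K > (0:ℝ), ∃ ϑ > (0:ℝ), ∀ v v' : ℝ → En n, memH1 v v' →
      -2*ρ*(l2norm v')^2
      + 2 * l2inner (fun ξ => f (Φref ξ + v ξ)) v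
      + (l2norm (fun ξ => g (Φref ξ + v ξ)))^2
      + ϑ * (h1norm v v')^2
      ≤ K * (1 + (l2norm v)^2) := by
  have hfΦ : MemLp (fun ξ => f (Φref ξ)) 2 volume := hfΦref
  have hgΦ : MemLp (fun ξ => g (Φref ξ)) 2 volume := hgΦref
  set lF : ℝ := l2norm (fun ξ => f (Φref ξ)) with hlF
  set lG : ℝ := l2norm (fun ξ => g (Φref ξ)) with hlG
  have hlFnn : 0 ≤ lF := ENNReal.toReal_nonneg
  have hlGnn : 0 ≤ lG := ENNReal.toReal_nonneg
  refine ⟨2*Kvar + 1 + 2*Kg^2 + ρ + lF^2 + 2*lG^2 + 1, by nlinarith, ρ, hρ, ?_⟩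
  intro v v' hv
  obtain ⟨-, hvL2, hv'L2⟩ := hv
  have hvL2' : MemLp v 2 volume := hvL2
  have hv'L2' : MemLp v' 2 volume := hv'L2
  set a : ℝ := l2norm v with hadef
  set b : ℝ := l2norm v' with hbdef
  have ha : 0 ≤ a := ENNReal.toReal_nonneg
  have hb : 0 ≤ b := ENNReal.toReal_nonneg
  have hH1 : (h1norm v v')^2 = a^2 + b^2 := by
    rw [h1norm, Real.sq_sqrt (by positivity)]
  -- continuity of g
  have hgc : Continuous g := by
    have : LipschitzWith (Real.toNNReal Kg) g := by
      refine LipschitzWith.of_dist_le_mul fun x y => ?_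
      simpa [dist_eq_norm, Real.coe_toNNReal _ hKg.le] using hgLip x y
    exact this.continuous
  have hΦsm : AEStronglyMeasurable Φref volume := hmeas.aestronglyMeasurable
  have hsumSM : AEStronglyMeasurable (fun ξ => Φref ξ + v ξ) volume := hΦsm.add hvL2'.1
  have hgvSM : AEStronglyMeasurable (fun ξ => g (Φref ξ + v ξ)) volume :=
    hgc.comp_aestronglyMeasurable hsumSM
  -- bound on the g term
  have hdiffSM : AEStronglyMeasurable (fun ξ => g (Φref ξ + v ξ) - g (Φref ξ)) volume :=
    hgvSM.sub hgΦ.1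
  have hdiff_bound : eLpNorm (fun ξ => g (Φref ξ + v ξ) - g (Φref ξ)) 2 volume
      ≤ (‖Kg‖₊ : ENNReal) * eLpNorm v 2 volume := by
    have h1 : eLpNorm (fun ξ => g (Φref ξ + v ξ) - g (Φref ξ)) 2 volume
        ≤ eLpNorm (Kg • v) 2 volume := by
      refine eLpNorm_mono fun ξ => ?_
      have := hgLip (Φref ξ + v ξ) (Φref ξ)
      rw [add_sub_cancel_left] at this
      calc ‖g (Φref ξ + v ξ) - g (Φref ξ)‖ ≤ Kg * ‖v ξ‖ := this
        _ ≤ ‖(Kg • v) ξ‖ := by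
            simp [Pi.smul_apply, norm_smul, abs_of_pos hKg]
    rwa [eLpNorm_const_smul] at h1
  have hgv_le : eLpNorm (fun ξ => g (Φref ξ + v ξ)) 2 volume
      ≤ (‖Kg‖₊ : ENNReal) * eLpNorm v 2 volume + eLpNorm (fun ξ => g (Φref ξ)) 2 volume := by
    have heq : (fun ξ => g (Φref ξ + v ξ))
        = (fun ξ => g (Φref ξ + v ξ) - g (Φref ξ)) + (fun ξ => g (Φref ξ)) := by
      ext ξ; simp
    calc eLpNorm (fun ξ => g (Φref ξ + v ξ)) 2 volume
        = eLpNorm ((fun ξ => g (Φref ξ + v ξ) - g (Φref ξ)) + (fun ξ => g (Φref ξ))) 2 volume := by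
          rw [← heq]
      _ ≤ eLpNorm (fun ξ => g (Φref ξ + v ξ) - g (Φref ξ)) 2 volume
          + eLpNorm (fun ξ => g (Φref ξ)) 2 volume :=
          eLpNorm_add_le hdiffSM hgΦ.1 one_le_two
      _ ≤ _ := add_le_add_left hdiff_bound _
  have hRHSfin : (‖Kg‖₊ : ENNReal) * eLpNorm v 2 volume + eLpNorm (fun ξ => g (Φref ξ)) 2 volume
      ≠ ⊤ := by
    exact (ENNReal.add_lt_top.mpr ⟨ENNReal.mul_lt_top ENNReal.coe_lt_top hvL2'.2, hgΦ.2⟩).ne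
  have hgv_real : l2norm (fun ξ => g (Φref ξ + v ξ)) ≤ Kg * a + lG := by
    have := ENNReal.toReal_mono hRHSfin hgv_le
    rw [ENNReal.toReal_add (ENNReal.mul_lt_top ENNReal.coe_lt_top hvL2'.2).ne hgΦ.2.ne,
      ENNReal.toReal_mul] at this
    simpa [hadef, hlG, l2norm, abs_of_pos hKg] using this
  have hgvnn : 0 ≤ l2norm (fun ξ => g (Φref ξ + v ξ)) := ENNReal.toReal_nonneg
  have hgkey : ∀ GG : ℝ, 0 ≤ GG → GG ≤ Kg * a + lG → GG^2 ≤ 2*Kg^2*a^2 + 2*lG^2 := by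
    intro GG h0 h1
    nlinarith [sq_nonneg (Kg * a - lG)]
  have hgsq : (l2norm (fun ξ => g (Φref ξ + v ξ)))^2 ≤ 2*Kg^2*a^2 + 2*lG^2 :=
    hgkey _ hgvnn hgv_real
  -- bound on the inner term
  have hinner : 2 * l2inner (fun ξ => f (Φref ξ + v ξ)) v ≤ 2*Kvar*a^2 + lF^2 + a^2 := by
    by_cases hI : Integrable (fun ξ => (inner ℝ (f (Φref ξ + v ξ)) (v ξ) : ℝ)) volume
    · have hpt : ∀ ξ, (inner ℝ (f (Φref ξ + v ξ)) (v ξ) : ℝ)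
          ≤ Kvar * ‖v ξ‖^2 + (inner ℝ (f (Φref ξ)) (v ξ) : ℝ) := by
        intro ξ
        have h1 := hVar (Φref ξ + v ξ) (Φref ξ)
        rw [add_sub_cancel_left] at h1
        have h2 : (inner ℝ (f (Φref ξ + v ξ)) (v ξ) : ℝ)
            = (inner ℝ (f (Φref ξ + v ξ) - f (Φref ξ)) (v ξ) : ℝ)
              + (inner ℝ (f (Φref ξ)) (v ξ) : ℝ) := by
          rw [inner_sub_left]; ring
        rw [h2]; linarith
      have hsqInt : Integrable (fun ξ => ‖v ξ‖^2) volume :=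
        (memLp_two_iff_integrable_sq_norm hvL2'.1).1 hvL2'
      have hFVint := aux_inner_integrable hfΦ hvL2'
      have hRHSint : Integrable
          (fun ξ => Kvar * ‖v ξ‖^2 + (inner ℝ (f (Φref ξ)) (v ξ) : ℝ)) volume :=
        (hsqInt.const_mul Kvar).add hFVint
      have hmono := integral_mono hI hRHSint hpt
      rw [integral_add (hsqInt.const_mul Kvar) hFVint, integral_const_mul,
        aux_integral_norm_sq hvL2'] at hmono
      have hFV := aux_inner_integral_le hfΦ hvL2'
      have hIle : l2inner (fun ξ => f (Φref ξ + v ξ)) v ≤ Kvar * a^2 + lF * a := by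
        rw [l2inner]
        calc ∫ ξ, (inner ℝ (f (Φref ξ + v ξ)) (v ξ) : ℝ)
            ≤ Kvar * (eLpNorm v 2 volume).toReal ^ 2
              + ∫ ξ, (inner ℝ (f (Φref ξ)) (v ξ) : ℝ) := hmono
          _ ≤ Kvar * a^2 + lF * a := by
              rw [hadef, l2norm]
              exact add_le_add_right hFV _
      linarith [sq_nonneg (lF - a)]
    · have : l2inner (fun ξ => f (Φref ξ + v ξ)) v = 0 := by
        rw [l2inner]; exact integral_undef hI
      rw [this, mul_zero]
      have h1 : 0 ≤ Kvar * a^2 := by positivity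
      linarith [sq_nonneg lF, sq_nonneg a]
  rw [hH1]
  have hKa : 0 ≤ (lF^2 + 2*lG^2 + 1) * a^2 := by positivity
  have hρb : 0 ≤ ρ * b^2 := by positivity
  set I := l2inner (fun ξ => f (Φref ξ + v ξ)) v with hI
  set GG := l2norm (fun ξ => g (Φref ξ + v ξ)) with hGG
  nlinarith [hinner, hgsq, hKa, hρb]
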